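/- A linear code Γ ⊆ F^n is an LCD code (i.e., Γ ∩ Γ^⊥ = {0}) if and only if the k×k matrix G G^T is nonsingular, where G is a generator matrix of Γ whose k rows form a basis of Γ. -/

import Mathlib

/-- The dual code of a linear code `Γ ⊆ F^n` with respect to the standard bilinear form. -/
def dualCode {F : Type*} [Field F] {n : ℕ} (Γ : Submodule F (Fin n → F)) :
    Submodule F (Fin n → F) where
  carrier := {v | ∀ u ∈ Γ, dotProduct u v = 0}
  zero_mem' := fun u _ => dotProduct_zero u
  add_mem' := by
    intro a b ha hb u hu
    rw [dotProduct_add, ha u hu, hb u hu, add_zero]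
  smul_mem' := by
    intro c v hv u hu
    rw [dotProduct_smul, hv u hu, smul_zero]

lemma vecMul_eq_sum' {F : Type*} [Field F] {n k : ℕ} (G : Matrix (Fin k) (Fin n) F)
    (c : Fin k → F) : Matrix.vecMul c G = ∑ i, c i • G i := by
  ext j
  simp [Matrix.vecMul, dotProduct, Finset.sum_apply]

lemma dot_key {F : Type*} [Field F] {n k : ℕ} (G : Matrix (Fin k) (Fin n) F)
    (d c : Fin k → F) :
    dotProduct (Matrix.vecMul d G) (Matrix.vecMul c G)
      = dotProduct d ((G * G.transpose).mulVec c) := by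
  rw [← Matrix.mulVec_mulVec, ← Matrix.dotProduct_mulVec, Matrix.mulVec_transpose]

/-- A linear code `Γ ⊆ F^n` with generator matrix `G` (rows a basis of `Γ`)
is an LCD code (`Γ ∩ Γ^⊥ = {0}`) if and only if `G * Gᵀ` is nonsingular. -/
theorem stmt5 (F : Type*) [Field F] [Fintype F] (n k : ℕ)
    (G : Matrix (Fin k) (Fin n) F)
    (hG : LinearIndependent F (fun i => G i))
    (Γ : Submodule F (Fin n → F))
    (hΓ : Γ = Submodule.span F (Set.range fun i => G i)) :
    Γ ⊓ dualCode Γ = ⊥ ↔ IsUnit (G * G.transpose).det := by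
  have hmem : ∀ v, v ∈ Γ ↔ ∃ c : Fin k → F, Matrix.vecMul c G = v := by
    intro v
    rw [hΓ, Submodule.mem_span_range_iff_exists_fun]
    constructor
    · rintro ⟨c, hc⟩; exact ⟨c, by rw [vecMul_eq_sum']; exact hc⟩
    · rintro ⟨c, hc⟩; exact ⟨c, by rw [← vecMul_eq_sum']; exact hc⟩
  constructor
  · -- LCD → det is unit
    intro h
    by_contra hdet
    have hdet0 : (G * G.transpose).det = 0 := by
      rcases eq_or_ne (G * G.transpose).det 0 with h0 | h0
      · exact h0
      · exact absurd (isUnit_iff_ne_zero.mpr h0) hdet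
    obtain ⟨c, hc0, hc⟩ := (Matrix.exists_mulVec_eq_zero_iff.mpr hdet0)
    set v := Matrix.vecMul c G with hv
    have hvΓ : v ∈ Γ := (hmem v).mpr ⟨c, rfl⟩
    have hvD : v ∈ dualCode Γ := by
      intro u hu
      obtain ⟨d, hd⟩ := (hmem u).mp hu
      rw [← hd, hv, dot_key, hc, dotProduct_zero]
    have hv0 : v = 0 := by
      have := Submodule.mem_inf.mpr ⟨hvΓ, hvD⟩
      rw [h] at this
      exact this
    have hc0' : c = 0 := by
      funext i
      apply Fintype.linearIndependent_iff.mp hG c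
      rw [← vecMul_eq_sum', ← hv, hv0]
    exact hc0 hc0'
  · -- det unit → LCD
    intro h
    rw [eq_bot_iff]
    rintro v ⟨hvΓ, hvD⟩
    obtain ⟨c, hc⟩ := (hmem v).mp hvΓ
    have hall : ∀ i, dotProduct (G i) v = 0 := by
      intro i
      apply hvD
      apply (hmem (G i)).mpr
      refine ⟨Pi.single i 1, ?_⟩
      ext j; simp [Matrix.vecMul, dotProduct, Pi.single_apply]
    have hmul : (G * G.transpose).mulVec c = 0 := by
      ext i
      have h1 := hall i
      rw [← hc] at h1
      have h2 : Matrix.vecMul (Pi.single i 1) G = G i := by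
        ext j; simp [Matrix.vecMul, dotProduct, Pi.single_apply]
      rw [← h2, dot_key] at h1
      simpa [dotProduct, Pi.single_apply] using h1
    have hc0 : c = 0 := by
      have hinv := Matrix.nonsing_inv_mul (G * G.transpose) h
      have heq : (G * G.transpose)⁻¹.mulVec ((G * G.transpose).mulVec c) = c := by
        rw [Matrix.mulVec_mulVec, hinv, Matrix.one_mulVec]
      rw [hmul, Matrix.mulVec_zero] at heq
      exact heq.symm
    simp [← hc, hc0]
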